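/- arXiv:2006.04439 — 4 statements merged into one kernel-verified Lean document; each statement's English description precedes it below -/
import Mathlib

section
/- Let x: [0,T] → ℝ be a solution of dx/dt = -(1/τ + f(t))·x + f(t)·A, where τ > 0, A ∈ ℝ, and f: [0,T] → ℝ satisfies 0 ≤ f(t) for all t. If x(0) ∈ [min(0,A), max(0,A)], then x(t) ∈ [min(0,A), max(0,A)] for all t ∈ [0,T]. -/
lemma aux_upper (T τ C M : ℝ) (hT : 0 ≤ T) (hτ : 0 < τ) (hM : 0 ≤ M) (hC : C ≤ M)
    (g : ℝ → ℝ) (hg : ∀ t ∈ Set.Icc (0 : ℝ) T, 0 ≤ g t)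
    (y : ℝ → ℝ)
    (hy : ∀ t ∈ Set.Icc (0 : ℝ) T,
      HasDerivAt y (-(1 / τ + g t) * y t + g t * C) t)
    (h0 : y 0 ≤ M) : ∀ t ∈ Set.Icc (0 : ℝ) T, y t ≤ M := by
  intro t ht
  have key : ∀ ε > (0 : ℝ), y t ≤ M + ε * Real.exp t := by
    intro ε hε
    have := image_le_of_deriv_right_lt_deriv_boundary
      (f := y) (f' := fun s => -(1 / τ + g s) * y s + g s * C)
      (a := 0) (b := T)
      (B := fun s => M + ε * Real.exp s) (B' := fun s => ε * Real.exp s)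
      (fun s hs => (hy s hs).continuousAt.continuousWithinAt)
      (fun s hs => (hy s (Set.Ico_subset_Icc_self hs)).hasDerivWithinAt)
      (by simp; nlinarith)
      (fun s => ((Real.hasDerivAt_exp s).const_mul ε).const_add M)
      ?_ ht
    · exact this
    · intro s hs heq
      have hgs : 0 ≤ g s := hg s (Set.Ico_subset_Icc_self hs)
      have hτ' : 0 < 1 / τ := by positivity
      have hes : 0 < Real.exp s := Real.exp_pos s
      rw [heq]
      nlinarith [mul_nonneg hgs (sub_nonneg.2 hC), mul_pos hε hes,
        mul_nonneg hgs (le_of_lt (mul_pos hε hes))]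
  have het : 0 < Real.exp t := Real.exp_pos t
  refine le_of_forall_pos_le_add ?_
  intro δ hδ
  have := key (δ / Real.exp t) (by positivity)
  rw [div_mul_cancel₀] at this
  · exact this
  · exact ne_of_gt het

/-- Invariance of the interval [min(0,A), max(0,A)] for the LTC scalar ODE
`x' = -(1/τ + f(t))·x + f(t)·A` with nonnegative continuous `f`. -/
theorem stmt_1 (T τ A : ℝ) (hT : 0 ≤ T) (hτ : 0 < τ)
    (f : ℝ → ℝ) (hfc : ContinuousOn f (Set.Icc 0 T))
    (hf : ∀ t ∈ Set.Icc (0 : ℝ) T, 0 ≤ f t)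
    (x : ℝ → ℝ)
    (hx : ∀ t ∈ Set.Icc (0 : ℝ) T,
      HasDerivAt x (-(1 / τ + f t) * x t + f t * A) t)
    (h0 : x 0 ∈ Set.Icc (min 0 A) (max 0 A)) :
    ∀ t ∈ Set.Icc (0 : ℝ) T, x t ∈ Set.Icc (min 0 A) (max 0 A) := by
  intro t ht
  constructor
  · -- lower bound via -x
    have hup := aux_upper T τ (-A) (-(min 0 A)) hT hτ
      (neg_nonneg.2 (min_le_left 0 A))
      (neg_le_neg (min_le_right 0 A))
      f hf (fun s => -(x s))
      (fun s hs => by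
        have : HasDerivAt (fun s => -(x s)) _ s := (hx s hs).neg
        convert this using 1
        ring)
      (by linarith [h0.1]) t ht
    linarith
  · exact aux_upper T τ A (max 0 A) hT hτ (le_max_left 0 A) (le_max_right 0 A)
      f hf x hx h0.2 t ht
end

section
/- Let f: ℝ → ℝ satisfy 0 < f(u) < 1 for all u. For the LTC neuron dx/dt = -(1/τ + W·f(u(t)))x + W·f(u(t))·A with τ > 0 and W > 0, the instantaneous time constant τ_sys(t) = τ/(1 + τ·W·f(u(t))) satisfies τ/(1 + τW) ≤ τ_sys(t) ≤ τ for all t. -/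
/-- The instantaneous time constant `τ/(1 + τ·W·f(u(t)))` of the LTC neuron
is bounded: `τ/(1+τW) ≤ τ_sys(t) ≤ τ`. -/
theorem stmt_3 (τ W : ℝ) (hτ : 0 < τ) (hW : 0 < W)
    (f : ℝ → ℝ) (hf : ∀ u : ℝ, 0 < f u ∧ f u < 1)
    (u : ℝ → ℝ) :
    ∀ t : ℝ,
      τ / (1 + τ * W) ≤ τ / (1 + τ * W * f (u t)) ∧
        τ / (1 + τ * W * f (u t)) ≤ τ := by
  intro t
  obtain ⟨h0, h1⟩ := hf (u t)
  have hpos : 0 < 1 + τ * W * f (u t) := by positivity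
  constructor
  · apply div_le_div_of_nonneg_left hτ.le hpos
    nlinarith [mul_pos hτ hW, mul_pos (mul_pos hτ hW) h0]
  · rw [div_le_iff₀ hpos]
    nlinarith [mul_pos hτ hW, mul_pos (mul_pos hτ hW) h0]
end

section
/- Let X be a centered Gaussian random vector in ℝ^k with diagonal covariance matrix, and let μ ∈ ℝ^k be a constant vector. Then E[‖X - μ‖] ≥ E[‖X‖]. -/
open MeasureTheory ProbabilityTheory Real
open scoped NNReal

lemma integrable_id_gaussianReal (v : ℝ≥0) :
    Integrable (fun x : ℝ => x) (gaussianReal 0 v) := by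
  by_cases hv : v = 0
  · rw [hv, gaussianReal_zero_var]
    exact (integrable_const (0:ℝ)).congr (by simp [Filter.EventuallyEq, ae_dirac_eq])
  · rw [gaussianReal_of_var_ne_zero _ hv, gaussianPDF_def]
    rw [integrable_withDensity_iff ((measurable_gaussianPDFReal 0 v).ennreal_ofReal)
      (Filter.Eventually.of_forall fun x => ENNReal.ofReal_lt_top)]
    have hvpos : (0:ℝ) < (v:ℝ) := by positivity
    have hb : (0:ℝ) < (2 * (v:ℝ))⁻¹ := by positivity
    have h := (integrable_mul_exp_neg_mul_sq hb).const_mul ((Real.sqrt (2 * π * v))⁻¹)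
    have heq : (fun x : ℝ => x * (ENNReal.ofReal (gaussianPDFReal 0 v x)).toReal)
        = fun x : ℝ => (Real.sqrt (2 * π * v))⁻¹ * (x * Real.exp (-(2 * (v:ℝ))⁻¹ * x ^ 2)) := by
      funext x
      rw [ENNReal.toReal_ofReal (gaussianPDFReal_nonneg 0 v x), gaussianPDFReal]
      rw [sub_zero, neg_div, div_eq_inv_mul]
      ring_nf
    rw [heq]
    exact h

lemma map_pi_eq {Ω : Type*} [MeasureSpace Ω] [IsProbabilityMeasure (ℙ : Measure Ω)]
    {k : ℕ} (f : Fin k → Ω → ℝ) (hmeas : ∀ i, Measurable (f i))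
    (hindep : iIndepFun f ℙ) :
    Measure.map (fun ω i => f i ω) ℙ = Measure.pi (fun i => Measure.map (f i) ℙ) := by
  haveI : ∀ i, IsProbabilityMeasure (Measure.map (f i) ℙ) :=
    fun i => Measure.isProbabilityMeasure_map (hmeas i).aemeasurable
  refine (Measure.pi_eq (μ := fun i => Measure.map (f i) ℙ) fun s hs => ?_).symm
  rw [Measure.map_apply (measurable_pi_lambda _ hmeas) (MeasurableSet.univ_pi hs)]
  have h1 : (fun ω i => f i ω) ⁻¹' Set.univ.pi s = ⋂ i ∈ Finset.univ, f i ⁻¹' s i := by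
    ext ω; simp [Set.mem_univ_pi]
  rw [h1, hindep.measure_inter_preimage_eq_mul Finset.univ (fun i _ => hs i)]
  exact Finset.prod_congr rfl fun i _ => (Measure.map_apply (hmeas i) (hs i)).symm

/-- Norm and translation: for a centered Gaussian vector `X` in ℝ^k with
independent coordinates (diagonal covariance) and a constant vector `μ`,
`E[‖X - μ‖] ≥ E[‖X‖]`. -/
theorem stmt_8 {Ω : Type*} [MeasureSpace Ω] [IsProbabilityMeasure (ℙ : Measure Ω)]
    (k : ℕ) (v : Fin k → ℝ≥0)
    (X : Ω → EuclideanSpace ℝ (Fin k))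
    (hmeas : ∀ i, Measurable fun ω => X ω i)
    (hgauss : ∀ i, Measure.map (fun ω => X ω i) ℙ = gaussianReal 0 (v i))
    (hindep : iIndepFun
      (fun i ω => X ω i) ℙ)
    (μ : EuclideanSpace ℝ (Fin k)) :
    ∫ ω, ‖X ω‖ ∂ℙ ≤ ∫ ω, ‖X ω - μ‖ ∂ℙ := by
  -- marginals of the negated coordinates
  have hmeasN : ∀ i, Measurable fun ω => -(X ω i) := fun i => (hmeas i).neg
  have hgaussN : ∀ i, Measure.map (fun ω => -(X ω i)) ℙ = gaussianReal 0 (v i) := by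
    intro i
    have hc : (fun ω => -(X ω i)) = (fun x : ℝ => -1 * x) ∘ (fun ω => X ω i) := by
      funext ω; simp
    rw [hc, ← Measure.map_map (by fun_prop : Measurable fun x : ℝ => -1 * x) (hmeas i), hgauss i,
      gaussianReal_map_const_mul]
    have h2 : NNReal.mk ((-1:ℝ)^2) (sq_nonneg _) = 1 := by ext; norm_num
    rw [h2, one_mul, mul_zero]
  have hindepN : iIndepFun (fun i ω => -(X ω i)) ℙ :=
    hindep.comp (fun _ x => -x) (fun _ => measurable_neg)
  -- joint laws agree
  have hY : Measure.map (fun ω i => X ω i) ℙ = Measure.pi (fun i => gaussianReal 0 (v i)) := by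
    rw [map_pi_eq _ hmeas hindep]; exact congrArg _ (funext hgauss)
  have hZ : Measure.map (fun ω i => -(X ω i)) ℙ = Measure.pi (fun i => gaussianReal 0 (v i)) := by
    rw [map_pi_eq _ hmeasN hindepN]; exact congrArg _ (funext hgaussN)
  -- the function computing ‖· - μ‖ on the pi type
  set F : (Fin k → ℝ) → ℝ := fun x => Real.sqrt (∑ i, (x i - μ i)^2) with hF
  have hFmeas : Measurable F := by
    apply Measurable.sqrt
    exact Finset.measurable_sum _ fun i _ => ((measurable_pi_apply i).sub_const _).pow_const 2
  have hnorm_sub : ∀ ω, ‖X ω - μ‖ = F (fun i => X ω i) := by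
    intro ω
    rw [EuclideanSpace.norm_eq]
    congr 1
    refine Finset.sum_congr rfl fun i _ => ?_
    rw [Real.norm_eq_abs, sq_abs]
    norm_num [PiLp.sub_apply]
  have hnorm_add : ∀ ω, ‖X ω + μ‖ = F (fun i => -(X ω i)) := by
    intro ω
    rw [EuclideanSpace.norm_eq]
    congr 1
    refine Finset.sum_congr rfl fun i _ => ?_
    rw [Real.norm_eq_abs, sq_abs]
    have : -(X ω i) - μ i = -(X ω i + μ i) := by ring
    rw [this, neg_sq]
    norm_num [PiLp.add_apply]
  -- symmetry: E‖X - μ‖ = E‖X + μ‖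
  have hsym : ∫ ω, ‖X ω - μ‖ ∂ℙ = ∫ ω, ‖X ω + μ‖ ∂ℙ := by
    calc ∫ ω, ‖X ω - μ‖ ∂ℙ = ∫ ω, F (fun i => X ω i) ∂ℙ := by simp_rw [hnorm_sub]
    _ = ∫ x, F x ∂(Measure.map (fun ω i => X ω i) ℙ) := by
        rw [integral_map (measurable_pi_lambda _ hmeas).aemeasurable
          (hFmeas.aestronglyMeasurable)]
    _ = ∫ x, F x ∂(Measure.map (fun ω i => -(X ω i)) ℙ) := by rw [hY, hZ]
    _ = ∫ ω, F (fun i => -(X ω i)) ∂ℙ := by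
        rw [integral_map (measurable_pi_lambda _ hmeasN).aemeasurable
          (hFmeas.aestronglyMeasurable)]
    _ = ∫ ω, ‖X ω + μ‖ ∂ℙ := by simp_rw [hnorm_add]
  -- integrability
  have hXi : ∀ i, Integrable (fun ω => X ω i) ℙ := by
    intro i
    have := (integrable_map_measure
      (by rw [hgauss i]; exact measurable_id.aestronglyMeasurable)
      (hmeas i).aemeasurable).mp (by rw [hgauss i]; exact integrable_id_gaussianReal (v i))
    exact this
  have hsum : Integrable (fun ω => ∑ i, |X ω i|) ℙ :=
    integrable_finset_sum _ fun i _ => (hXi i).abs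
  have hbound : ∀ (x : EuclideanSpace ℝ (Fin k)), ‖x‖ ≤ ∑ i, |x i| := by
    intro x
    rw [EuclideanSpace.norm_eq]
    have h1 : ∑ i, ‖x i‖^2 ≤ (∑ i, |x i|)^2 := by
      simp_rw [Real.norm_eq_abs]
      exact Finset.sum_sq_le_sq_sum_of_nonneg fun i _ => abs_nonneg _
    calc Real.sqrt (∑ i, ‖x i‖^2) ≤ Real.sqrt ((∑ i, |x i|)^2) := Real.sqrt_le_sqrt h1
    _ = ∑ i, |x i| := Real.sqrt_sq (Finset.sum_nonneg fun i _ => abs_nonneg _)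
  have hXmeasN : AEStronglyMeasurable (fun ω => ‖X ω‖) ℙ := by
    have : (fun ω => ‖X ω‖) = fun ω => Real.sqrt (∑ i, (X ω i)^2) := by
      funext ω; rw [EuclideanSpace.norm_eq]
      congr 1; exact Finset.sum_congr rfl fun i _ => by rw [Real.norm_eq_abs, sq_abs]
    rw [this]
    exact (Measurable.sqrt (Finset.measurable_sum _ fun i _ =>
      (hmeas i).pow_const 2)).aestronglyMeasurable
  have hI1 : Integrable (fun ω => ‖X ω‖) ℙ := by
    refine hsum.mono hXmeasN (Filter.Eventually.of_forall fun ω => ?_)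
    rw [Real.norm_eq_abs, abs_of_nonneg (norm_nonneg _), Real.norm_eq_abs,
      abs_of_nonneg (Finset.sum_nonneg fun i _ => abs_nonneg _)]
    exact hbound _
  have hI2 : Integrable (fun ω => ‖X ω - μ‖) ℙ := by
    refine (hI1.add (integrable_const ‖μ‖)).mono ?_ (Filter.Eventually.of_forall fun ω => ?_)
    · have : (fun ω => ‖X ω - μ‖) = fun ω => F (fun i => X ω i) := funext hnorm_sub
      rw [this]
      exact (hFmeas.comp (measurable_pi_lambda _ hmeas)).aestronglyMeasurable
    · simp only [Pi.add_apply]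
      calc ‖‖X ω - μ‖‖ = ‖X ω - μ‖ := norm_norm _
      _ ≤ ‖X ω‖ + ‖μ‖ := norm_sub_le _ _
      _ ≤ ‖‖X ω‖ + ‖μ‖‖ := by rw [Real.norm_eq_abs]; exact le_abs_self _
  have hI3 : Integrable (fun ω => ‖X ω + μ‖) ℙ := by
    refine (hI1.add (integrable_const ‖μ‖)).mono ?_ (Filter.Eventually.of_forall fun ω => ?_)
    · have : (fun ω => ‖X ω + μ‖) = fun ω => F (fun i => -(X ω i)) := funext hnorm_add
      rw [this]
      exact (hFmeas.comp (measurable_pi_lambda _ hmeasN)).aestronglyMeasurable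
    · simp only [Pi.add_apply]
      calc ‖‖X ω + μ‖‖ = ‖X ω + μ‖ := norm_norm _
      _ ≤ ‖X ω‖ + ‖μ‖ := norm_add_le _ _
      _ ≤ ‖‖X ω‖ + ‖μ‖‖ := by rw [Real.norm_eq_abs]; exact le_abs_self _
  -- main estimate
  have hmain : ∫ ω, ‖X ω‖ ∂ℙ ≤ ∫ ω, (‖X ω - μ‖ + ‖X ω + μ‖) / 2 ∂ℙ := by
    refine integral_mono hI1 ((hI2.add hI3).div_const 2) fun ω => ?_
    have h2 : (2:ℝ) * ‖X ω‖ = ‖(X ω - μ) + (X ω + μ)‖ := by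
      rw [show (X ω - μ) + (X ω + μ) = (2:ℝ) • X ω by module, norm_smul]
      norm_num
    have := norm_add_le (X ω - μ) (X ω + μ)
    rw [← h2] at this
    linarith
  rw [integral_div, integral_add hI2 hI3, ← hsym] at hmain
  linarith
end

section
/- Let F: ℝⁿ → ℝⁿ be a bounded, nonnegative (coordinatewise) C¹ map with 0 ≤ F_i(x) ≤ M for all i and x, let τ > 0 and A ∈ ℝ with A ≥ 0. Then for any solution x(t) of ẋ_i = -(1/τ + F_i(x))x_i + A·F_i(x) with x(0) = x₀, each coordinate satisfies min(x_i(0), τAM/(1+τM), 0) ≤ x_i(t) ≤ max(x_i(0), τAM/(1+τM)) for all t ≥ 0 in the domain of the solution; consequently the solution is bounded and extends to a unique solution on [0, ∞). -/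
open Set

lemma ltc_barrier {z dz : ℝ → ℝ} {T : ℝ}
    (hd : ∀ t ∈ Icc (0:ℝ) T, HasDerivAt z (dz t) t)
    (h0 : z 0 ≤ 0)
    (hb : ∀ t ∈ Icc (0:ℝ) T, 0 ≤ z t → dz t ≤ 0) :
    ∀ t ∈ Icc (0:ℝ) T, z t ≤ 0 := by
  intro t ht
  have hz_cont : ContinuousOn z (Icc 0 T) := fun s hs => (hd s hs).continuousAt.continuousWithinAt
  have key : ∀ ε > (0:ℝ), z t ≤ ε * (1 + t) := by
    intro ε hε
    have hB : ∀ x : ℝ, HasDerivAt (fun u => ε * (1 + u)) ε x := by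
      intro x
      simpa using (((hasDerivAt_id x).const_add (1:ℝ)).const_mul ε)
    have ha0 : z 0 ≤ ε * (1 + 0) := by nlinarith
    have := image_le_of_deriv_right_lt_deriv_boundary (f := z) (f' := dz) (a := 0) (b := T)
      (B := fun u => ε * (1 + u)) (B' := fun _ => ε)
      hz_cont (fun x hx => (hd x (Ico_subset_Icc_self hx)).hasDerivWithinAt)
      ha0 hB
      (fun x hx heq => by
        have hx0 : (0:ℝ) ≤ x := hx.1
        have heq' : z x = ε * (1 + x) := heq
        have : 0 ≤ z x := by nlinarith
        exact lt_of_le_of_lt (hb x (Ico_subset_Icc_self hx) this) hε)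
      ht
    exact this
  by_contra hpos
  push_neg at hpos
  have h1t : (0:ℝ) < 1 + t := by linarith [ht.1]
  have := key (z t / (2 * (1 + t))) (by positivity)
  have heq : z t / (2 * (1 + t)) * (1 + t) = z t / 2 := by field_simp
  rw [heq] at this
  linarith

lemma ltc_key_upper {τ A M Fv v : ℝ} (hτ : 0 < τ) (hA : 0 ≤ A) (hM : 0 ≤ M)
    (hF0 : 0 ≤ Fv) (hFM : Fv ≤ M)
    (hvc : τ * A * M / (1 + τ * M) ≤ v) (hv0 : 0 ≤ v) :
    -(1 / τ + Fv) * v + A * Fv ≤ 0 := by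
  have hden : (0:ℝ) < 1 + τ * M := by nlinarith
  rw [div_le_iff₀ hden] at hvc
  have e1 : τ * (A * Fv) * (1 + τ * M) ≤ τ * A * M * (1 + τ * Fv) := by
    nlinarith [mul_nonneg (mul_nonneg hτ.le hA) (sub_nonneg.2 hFM)]
  have e2 : τ * A * M * (1 + τ * Fv) ≤ v * (1 + τ * M) * (1 + τ * Fv) :=
    mul_le_mul_of_nonneg_right hvc (by positivity)
  have e3 : τ * (A * Fv) * (1 + τ * M) ≤ v * (1 + τ * Fv) * (1 + τ * M) := by nlinarith
  have h2 : τ * (A * Fv) ≤ v * (1 + τ * Fv) := le_of_mul_le_mul_right e3 hden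
  have h3 : A * Fv ≤ v * (1 + τ * Fv) / τ := (le_div_iff₀ hτ).2 (by linarith [h2])
  have h4 : (1 / τ + Fv) * v = v * (1 + τ * Fv) / τ := by field_simp
  linarith [h3, h4.ge]

lemma ltc_key_lower {τ A Fv v : ℝ} (hτ : 0 < τ) (hA : 0 ≤ A)
    (hF0 : 0 ≤ Fv) (hv : v ≤ 0) :
    0 ≤ -(1 / τ + Fv) * v + A * Fv := by
  have h1 : (0:ℝ) ≤ 1 / τ + Fv := by positivity
  nlinarith [mul_nonneg hA hF0, mul_nonneg h1 (neg_nonneg.2 hv)]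


/-- LTC boundedness and global existence (Lemma 5): for a bounded nonnegative
`C¹` field `F` with `0 ≤ F_i ≤ M`, `τ > 0`, `A ≥ 0`, every solution of
`ẋ_i = -(1/τ + F_i(x))x_i + A·F_i(x)` satisfies the coordinatewise bounds
`min(x_i(0), τAM/(1+τM), 0) ≤ x_i(t) ≤ max(x_i(0), τAM/(1+τM))` on its
domain, and there is a unique solution on `[0, ∞)` with `x(0) = x₀`. -/
theorem stmt_16 {n : ℕ} (F : (Fin n → ℝ) → (Fin n → ℝ)) (M τ A : ℝ)
    (hF : ContDiff ℝ 1 F)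
    (hFb : ∀ x : Fin n → ℝ, ∀ i, 0 ≤ F x i ∧ F x i ≤ M)
    (hτ : 0 < τ) (hA : 0 ≤ A) (x₀ : Fin n → ℝ) :
    (∀ (x : ℝ → Fin n → ℝ) (T : ℝ), 0 ≤ T → x 0 = x₀ →
      (∀ i, ∀ t ∈ Set.Icc (0 : ℝ) T,
        HasDerivAt (fun s => x s i)
          (-(1 / τ + F (x t) i) * x t i + A * F (x t) i) t) →
      ∀ i, ∀ t ∈ Set.Icc (0 : ℝ) T,
        min (min (x₀ i) (τ * A * M / (1 + τ * M))) 0 ≤ x t i ∧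
          x t i ≤ max (x₀ i) (τ * A * M / (1 + τ * M))) ∧
    (∃ x : ℝ → Fin n → ℝ,
      (x 0 = x₀ ∧ ∀ i, ∀ t ∈ Set.Ici (0 : ℝ),
        HasDerivAt (fun s => x s i)
          (-(1 / τ + F (x t) i) * x t i + A * F (x t) i) t) ∧
      ∀ y : ℝ → Fin n → ℝ,
        (y 0 = x₀ ∧ ∀ i, ∀ t ∈ Set.Ici (0 : ℝ),
          HasDerivAt (fun s => y s i)
            (-(1 / τ + F (y t) i) * y t i + A * F (y t) i) t) →
        Set.EqOn y x (Set.Ici 0)) := by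
  -- trivial case `n = 0`
  rcases Nat.eq_zero_or_pos n with hn | hn
  · subst hn
    refine ⟨fun x T _ _ _ i => Fin.elim0 i, fun _ => x₀, ⟨rfl, fun i => Fin.elim0 i⟩,
      fun y _ t _ => funext fun i => Fin.elim0 i⟩
  -- main case
  have i₀ : Fin n := ⟨0, hn⟩
  have hM : 0 ≤ M := le_trans (hFb x₀ i₀).1 (hFb x₀ i₀).2
  set c : ℝ := τ * A * M / (1 + τ * M) with hc_def
  have hden : (0:ℝ) < 1 + τ * M := by nlinarith
  have hc0 : 0 ≤ c := by positivity
  set Bu : Fin n → ℝ := fun i => max (x₀ i) c with hBu_def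
  set Bl : Fin n → ℝ := fun i => min (min (x₀ i) c) 0 with hBl_def
  have hBl0 : ∀ i, Bl i ≤ 0 := fun i => min_le_right _ _
  have hBu0 : ∀ i, 0 ≤ Bu i := fun i => le_trans hc0 (le_max_right _ _)
  have hBuc : ∀ i, c ≤ Bu i := fun i => le_max_right _ _
  have hBlu : ∀ i, Bl i ≤ Bu i := fun i => le_trans (hBl0 i) (hBu0 i)
  -- Part 1: coordinatewise bounds for any solution on [0,T]
  have part1 : ∀ (x : ℝ → Fin n → ℝ) (T : ℝ), 0 ≤ T → x 0 = x₀ →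
      (∀ i, ∀ t ∈ Set.Icc (0 : ℝ) T,
        HasDerivAt (fun s => x s i)
          (-(1 / τ + F (x t) i) * x t i + A * F (x t) i) t) →
      ∀ i, ∀ t ∈ Set.Icc (0 : ℝ) T,
        min (min (x₀ i) c) 0 ≤ x t i ∧ x t i ≤ max (x₀ i) c := by
    intro x T hT hx0 hd i t ht
    constructor
    · -- lower bound
      have := ltc_barrier (z := fun s => Bl i - x s i)
        (dz := fun s => -(-(1 / τ + F (x s) i) * x s i + A * F (x s) i)) (T := T)
        (fun s hs => ((hd i s hs).const_sub (Bl i)))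
        (by simp [hx0]; exact le_trans (min_le_left _ _) (min_le_left _ _))
        (fun s hs hzs => by
          have hzs' : 0 ≤ Bl i - x s i := hzs
          have hxle : x s i ≤ Bl i := by linarith
          have hx0' : x s i ≤ 0 := le_trans hxle (hBl0 i)
          have := ltc_key_lower (τ := τ) (A := A) (Fv := F (x s) i) (v := x s i)
            hτ hA (hFb (x s) i).1 hx0'
          linarith)
        t ht
      have this' : Bl i - x t i ≤ 0 := this
      simpa [Bl] using (by linarith : Bl i ≤ x t i)
    · -- upper bound
      have := ltc_barrier (z := fun s => x s i - Bu i)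
        (dz := fun s => -(1 / τ + F (x s) i) * x s i + A * F (x s) i) (T := T)
        (fun s hs => ((hd i s hs).sub_const (Bu i)))
        (by simp [hx0]; exact le_max_left _ _)
        (fun s hs hzs => by
          have hzs' : 0 ≤ x s i - Bu i := hzs
          have hxge : Bu i ≤ x s i := by linarith
          exact ltc_key_upper hτ hA hM (hFb (x s) i).1 (hFb (x s) i).2
            (le_trans (hBuc i) hxge) (le_trans (hBu0 i) hxge))
        t ht
      have this' : x t i - Bu i ≤ 0 := this
      simpa [Bu] using (by linarith : x t i ≤ Bu i)
  refine ⟨part1, ?_⟩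
  -- the vector field, its clamp, and the modified globally Lipschitz field
  set f : (Fin n → ℝ) → (Fin n → ℝ) :=
    fun y i => -(1 / τ + F y i) * y i + A * F y i with hf_def
  have hf_eval : ∀ y i, f y i = -(1 / τ + F y i) * y i + A * F y i := fun y i => by rw [hf_def]
  have hf_cd : ContDiff ℝ 1 f := by
    rw [hf_def, contDiff_pi]
    intro i
    have hFi : ContDiff ℝ 1 (fun y => F y i) := contDiff_pi.mp hF i
    have hyi : ContDiff ℝ 1 (fun y : Fin n → ℝ => y i) := contDiff_pi.mp contDiff_id i
    exact ((contDiff_const.add hFi).neg.mul hyi).add (contDiff_const.mul hFi)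
  set pc : (Fin n → ℝ) → (Fin n → ℝ) := fun y i => max (Bl i) (min (y i) (Bu i)) with hpc_def
  have hpc_eval : ∀ y i, pc y i = max (Bl i) (min (y i) (Bu i)) := fun y i => by rw [hpc_def]
  set Box : Set (Fin n → ℝ) := Set.univ.pi (fun i => Icc (Bl i) (Bu i)) with hBox_def
  have hpc_mem : ∀ y, pc y ∈ Box := by
    intro y
    rw [hBox_def]
    exact Set.mem_univ_pi.mpr fun i => by
      rw [hpc_eval]
      exact ⟨le_max_left _ _, max_le (hBlu i) (min_le_right _ _)⟩
  have hBox_mem : ∀ y, y ∈ Box ↔ ∀ i, Bl i ≤ y i ∧ y i ≤ Bu i := by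
    intro y
    rw [hBox_def]
    constructor
    · intro h i; exact ⟨(Set.mem_univ_pi.mp h i).1, (Set.mem_univ_pi.mp h i).2⟩
    · intro h; exact Set.mem_univ_pi.mpr fun i => ⟨(h i).1, (h i).2⟩
  have hpc_id : ∀ y, y ∈ Box → pc y = y := by
    intro y hy
    funext i
    rw [hpc_eval, min_eq_left ((hBox_mem y).mp hy i).2, max_eq_right ((hBox_mem y).mp hy i).1]
  have hx₀Box : x₀ ∈ Box := (hBox_mem x₀).mpr fun i =>
    ⟨le_trans (min_le_left _ _) (min_le_left _ _), le_max_left _ _⟩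
  have hpc_lip : LipschitzWith 1 pc := by
    apply LipschitzWith.of_dist_le_mul
    intro y z
    rw [NNReal.coe_one, one_mul, dist_pi_le_iff dist_nonneg]
    intro i
    have h1 : dist (pc y i) (pc z i) ≤ dist (y i) (z i) := by
      rw [hpc_eval, hpc_eval, Real.dist_eq, Real.dist_eq]
      calc |max (Bl i) (min (y i) (Bu i)) - max (Bl i) (min (z i) (Bu i))|
          ≤ |min (y i) (Bu i) - min (z i) (Bu i)| := by
            rw [max_comm (Bl i), max_comm (Bl i)]
            exact abs_max_sub_max_le_abs _ _ _
        _ ≤ |y i - z i| := by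
            have h2 := abs_min_sub_min_le_max (y i) (Bu i) (z i) (Bu i)
            rwa [sub_self, abs_zero, max_eq_left (abs_nonneg _)] at h2
    exact le_trans h1 (dist_le_pi_dist y z i)
  have hBox_cvx : Convex ℝ Box := by
    rw [hBox_def]; exact convex_pi fun i _ => convex_Icc _ _
  have hBox_cpt : IsCompact Box := by
    rw [hBox_def]; exact isCompact_univ_pi fun i => isCompact_Icc
  obtain ⟨C₁, hC₁⟩ := hBox_cpt.exists_bound_of_continuousOn
    ((hf_cd.continuous_fderiv one_ne_zero).continuousOn)
  set K₁ : NNReal := ⟨max C₁ 0, le_max_right _ _⟩ with hK₁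
  have hlipf : LipschitzOnWith K₁ f Box := by
    apply hBox_cvx.lipschitzOnWith_of_nnnorm_fderiv_le
      (fun x _ => (hf_cd.differentiable one_ne_zero).differentiableAt)
    intro x hx
    rw [← NNReal.coe_le_coe, coe_nnnorm]
    exact le_trans (hC₁ x hx) (le_max_left _ _)
  set g : (Fin n → ℝ) → (Fin n → ℝ) := f ∘ pc with hg_def
  have hg_eval : ∀ y i, g y i = f (pc y) i := fun y i => by rw [hg_def]; rfl
  have hg_lip : LipschitzWith (K₁ * 1) g := by
    rw [hg_def, ← lipschitzOnWith_univ]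
    exact hlipf.comp hpc_lip.lipschitzOnWith (fun y _ => hpc_mem y)
  obtain ⟨C₂', hC₂'⟩ := hBox_cpt.exists_bound_of_continuousOn (hf_cd.continuous.continuousOn)
  set C₂ : ℝ := max C₂' 0 with hC₂
  have hC₂0 : (0:ℝ) ≤ C₂ := le_max_right _ _
  have hg_bdd : ∀ y, ‖g y‖ ≤ C₂ := by
    intro y
    rw [hg_def]
    exact le_trans (hC₂' _ (hpc_mem y)) (le_max_left _ _)
  -- Picard–Lindelöf on each interval [-(N+1), N+1]
  have hsol : ∀ N : ℕ, ∃ xf : ℝ → Fin n → ℝ, xf 0 = x₀ ∧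
      ∀ t ∈ Ioo (-(N+1:ℝ)) (N+1), HasDerivAt xf (g (xf t)) t := by
    intro N
    have hN1 : (0:ℝ) ≤ (N:ℝ) + 1 := by positivity
    have hpl : IsPicardLindelof (fun _ y => g y) (tmin := -(N+1:ℝ)) (tmax := N+1)
        ⟨0, by constructor <;> linarith⟩ x₀ (⟨C₂, hC₂0⟩ * ⟨(N:ℝ)+1, hN1⟩) 0 ⟨C₂, hC₂0⟩ (K₁*1) :=
      IsPicardLindelof.of_time_independent (fun x _ => hg_bdd x) hg_lip.lipschitzOnWith
        (by simp; exact le_rfl)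
    obtain ⟨xf, h0, hD⟩ := hpl.exists_eq_forall_mem_Icc_hasDerivWithinAt₀
    exact ⟨xf, h0, fun t ht => (hD t (Ioo_subset_Icc_self ht)).hasDerivAt
      (Icc_mem_nhds ht.1 ht.2)⟩
  choose sol hsol0 hsolD using hsol
  -- local solutions agree
  have huniq2 : ∀ (N M' : ℕ) (t : ℝ), |t| < (N+1:ℝ) → |t| < (M'+1:ℝ) →
      sol N t = sol M' t := by
    intro N M' t hN hM'
    set b : ℝ := min ((N:ℝ)+1) ((M':ℝ)+1) with hb
    have hb0 : (0:ℝ) < b := lt_min (by positivity) (by positivity)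
    have hsub1 : Ioo (-b) b ⊆ Ioo (-(N+1:ℝ)) (N+1) :=
      Ioo_subset_Ioo (neg_le_neg (min_le_left _ _)) (min_le_left _ _)
    have hsub2 : Ioo (-b) b ⊆ Ioo (-(M'+1:ℝ)) (M'+1) :=
      Ioo_subset_Ioo (neg_le_neg (min_le_right _ _)) (min_le_right _ _)
    have := ODE_solution_unique_of_mem_Ioo (v := fun _ y => g y) (s := fun _ => univ)
      (K := K₁*1) (fun _ _ => hg_lip.lipschitzOnWith)
      (t₀ := 0) (a := -b) (b := b) ⟨neg_lt_zero.mpr hb0, hb0⟩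
      (fun s hs => ⟨hsolD N s (hsub1 hs), mem_univ _⟩)
      (fun s hs => ⟨hsolD M' s (hsub2 hs), mem_univ _⟩)
      ((hsol0 N).trans (hsol0 M').symm)
    exact this (mem_Ioo.mpr (abs_lt.mp (lt_min hN hM')))
  -- the glued global solution
  set X : ℝ → Fin n → ℝ := fun t => sol ⌈|t|⌉₊ t with hX_def
  have hXeq : ∀ (N : ℕ) (t : ℝ), |t| < (N+1:ℝ) → X t = sol N t := by
    intro N t h
    rw [hX_def]
    exact huniq2 _ _ t (by push_cast; linarith [Nat.le_ceil |t|]) h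
  have hX0 : X 0 = x₀ := by
    have h := hXeq 0 0 (by norm_num)
    rw [h, hsol0]
  have hXd : ∀ t : ℝ, HasDerivAt X (g (X t)) t := by
    intro t
    have htN : |t| < (⌈|t|⌉₊:ℝ)+1 := lt_of_le_of_lt (Nat.le_ceil _) (lt_add_one _)
    have hmem : t ∈ Ioo (-(⌈|t|⌉₊+1:ℝ)) (⌈|t|⌉₊+1) := mem_Ioo.mpr (abs_lt.mp htN)
    have hEv : X =ᶠ[nhds t] sol ⌈|t|⌉₊ := by
      filter_upwards [Ioo_mem_nhds hmem.1 hmem.2] with s hs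
      exact hXeq _ s (abs_lt.mpr ⟨hs.1, hs.2⟩)
    have h2 := (hsolD _ t hmem).congr_of_eventuallyEq hEv
    rwa [hXeq _ t htN]
  have hXcoord : ∀ (t : ℝ) (i : Fin n), HasDerivAt (fun s => X s i) (g (X t) i) t :=
    fun t i => hasDerivAt_pi.mp (hXd t) i
  -- forward invariance of the box
  have hXbox : ∀ t : ℝ, 0 ≤ t → X t ∈ Box := by
    intro t ht
    rw [hBox_mem]
    intro i
    constructor
    · have hbar := ltc_barrier (z := fun s => Bl i - X s i) (dz := fun s => -(g (X s) i))
        (T := t) (fun s _ => (hXcoord s i).const_sub (Bl i))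
        (by
          show Bl i - X 0 i ≤ 0
          rw [hX0]
          linarith [((hBox_mem x₀).mp hx₀Box i).1])
        (fun s hs hzs => by
          have hzs' : (0:ℝ) ≤ Bl i - X s i := hzs
          have h1 : X s i ≤ Bl i := by linarith
          have hpci : pc (X s) i = Bl i := by
            rw [hpc_eval, min_eq_left (le_trans h1 (hBlu i)), max_eq_left h1]
          have hkey := ltc_key_lower (τ := τ) (A := A) (Fv := F (pc (X s)) i) (v := Bl i)
            hτ hA (hFb _ i).1 (hBl0 i)
          have h2 : (0:ℝ) ≤ g (X s) i := by
            rw [hg_eval, hf_eval, hpci]; exact hkey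
          show -(g (X s) i) ≤ 0
          linarith)
        t ⟨ht, le_rfl⟩
      have hbar' : Bl i - X t i ≤ 0 := hbar
      linarith
    · have hbar := ltc_barrier (z := fun s => X s i - Bu i) (dz := fun s => g (X s) i)
        (T := t) (fun s _ => (hXcoord s i).sub_const (Bu i))
        (by
          show X 0 i - Bu i ≤ 0
          rw [hX0]
          linarith [((hBox_mem x₀).mp hx₀Box i).2])
        (fun s hs hzs => by
          have hzs' : (0:ℝ) ≤ X s i - Bu i := hzs
          have h1 : Bu i ≤ X s i := by linarith
          have hpci : pc (X s) i = Bu i := by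
            rw [hpc_eval, min_eq_right h1, max_eq_right (hBlu i)]
          have hkey := ltc_key_upper (τ := τ) (A := A) (M := M) (Fv := F (pc (X s)) i)
            (v := Bu i) hτ hA hM (hFb _ i).1 (hFb _ i).2 (hBuc i) (hBu0 i)
          show g (X s) i ≤ 0
          rw [hg_eval, hf_eval, hpci]
          exact hkey)
        t ⟨ht, le_rfl⟩
      have hbar' : X t i - Bu i ≤ 0 := hbar
      linarith
  -- on [0, ∞) the glued solution solves the original equation
  have hXf : ∀ i, ∀ t ∈ Ici (0:ℝ), HasDerivAt (fun s => X s i)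
      (-(1 / τ + F (X t) i) * X t i + A * F (X t) i) t := by
    intro i t ht
    have heqg : g (X t) i = -(1 / τ + F (X t) i) * X t i + A * F (X t) i := by
      rw [hg_eval, hpc_id _ (hXbox t ht), hf_eval]
    rw [← heqg]
    exact hXcoord t i
  refine ⟨X, ⟨hX0, hXf⟩, ?_⟩
  -- uniqueness
  rintro y ⟨hy0, hyD⟩
  have hybox : ∀ s : ℝ, 0 ≤ s → y s ∈ Box := by
    intro s hs
    have h := part1 y s hs hy0 (fun i u hu => hyD i u hu.1)
    rw [hBox_mem]
    intro i
    exact (h i s ⟨hs, le_rfl⟩)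
  have hyg : ∀ s : ℝ, 0 ≤ s → HasDerivAt y (g (y s)) s := by
    intro s hs
    apply hasDerivAt_pi.mpr
    intro i
    have heqg : g (y s) i = -(1 / τ + F (y s) i) * y s i + A * F (y s) i := by
      rw [hg_eval, hpc_id _ (hybox s hs), hf_eval]
    rw [heqg]
    exact hyD i s hs
  intro t ht
  have h := ODE_solution_unique (v := fun _ y' => g y') (K := K₁*1) (fun _ => hg_lip)
    (f := y) (g := X) (a := 0) (b := t)
    (fun s hs => (hyg s hs.1).continuousAt.continuousWithinAt)
    (fun s hs => (hyg s hs.1).hasDerivWithinAt)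
    (fun s _ => (hXd s).continuousAt.continuousWithinAt)
    (fun s _ => (hXd s).hasDerivWithinAt)
    (hy0.trans hX0.symm)
  exact h ⟨ht, le_rfl⟩
end
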